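/- Let Ω ⊂ Z^N (N = 2^n) be the set of tuples (ĥf(u))_{u ∈ F_2^n} of Walsh–Hadamard spectra of all Boolean functions f : F_2^n → F_2, and let p be the uniform distribution on Ω. Then the Latin dependence degree L(p) = Σ_{(b_1,...,b_N) ∈ Ω} Π_{i=1}^N p_i(b_i), where p_i is the i-th marginal of p, satisfies L(p) ≤ exp(23/18)·(8/(π e N))^{N/2}. -/

import Mathlib

open Real

/-- The Walsh–Hadamard spectrum of a Boolean function. -/
def walsh {n : ℕ} (f : (Fin n → ZMod 2) → ZMod 2) (u : Fin n → ZMod 2) : ℤ :=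
  ∑ x : Fin n → ZMod 2, (-1 : ℤ) ^ ((f x + ∑ i, x i * u i).val)

/-- The set of Walsh–Hadamard spectra of all Boolean functions in `n` variables,
viewed as integer-valued tuples indexed by `F_2^n`. -/
noncomputable def spectra (n : ℕ) : Finset ((Fin n → ZMod 2) → ℤ) :=
  Finset.univ.image (fun f : (Fin n → ZMod 2) → ZMod 2 => walsh f)

/-- The marginal of the uniform distribution on `spectra n` at coordinate `u`
and value `x`. -/
noncomputable def marginal (n : ℕ) (u : Fin n → ZMod 2) (x : ℤ) : ℝ :=
  ((spectra n).filter (fun b => b u = x)).card / (spectra n).card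

/-- The Latin dependence degree of the uniform distribution on `spectra n`. -/
noncomputable def latinDegree (n : ℕ) : ℝ :=
  ∑ b ∈ spectra n, ∏ u : Fin n → ZMod 2, marginal n u (b u)


open Real Finset Stirling Topology Nat

def chi (a : ZMod 2) : ℤ := (-1) ^ a.val

lemma chi_add (a b : ZMod 2) : chi (a + b) = chi a * chi b := by revert a b; decide
lemma chi_mul_self (a : ZMod 2) : chi a * chi a = 1 := by revert a; decide
lemma chi_inj {a b : ZMod 2} (h : chi a = chi b) : a = b := by revert h; revert a b; decide
lemma chi_eq (a : ZMod 2) : chi a = 1 - 2 * (a.val : ℤ) := by revert a; decide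

lemma chi_sum {ι : Type*} (s : Finset ι) (f : ι → ZMod 2) :
    chi (∑ i ∈ s, f i) = ∏ i ∈ s, chi (f i) := by
  induction s using Finset.cons_induction with
  | empty => simp [chi]
  | cons a s ha ih => rw [Finset.sum_cons, Finset.prod_cons, chi_add, ih]

lemma sum_chi_single (c : ZMod 2) : ∑ v : ZMod 2, chi (c * v) = if c = 0 then 2 else 0 := by
  revert c; decide

lemma orth {n : ℕ} (c : Fin n → ZMod 2) :
    ∑ u : Fin n → ZMod 2, chi (∑ i, c i * u i) = if c = 0 then 2 ^ n else 0 := by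
  have h1 : ∀ u : Fin n → ZMod 2, chi (∑ i, c i * u i) = ∏ i, chi (c i * u i) := fun u =>
    chi_sum _ _
  simp_rw [h1]
  rw [← Fintype.piFinset_univ, ← Finset.prod_univ_sum (fun _ => (Finset.univ : Finset (ZMod 2)))
    (fun i v => chi (c i * v))]
  simp_rw [sum_chi_single]
  by_cases hc : c = 0
  · simp [hc]
  · rw [if_neg hc]
    obtain ⟨i, hi⟩ := Function.ne_iff.mp hc
    exact Finset.prod_eq_zero (Finset.mem_univ i) (by simpa [Pi.zero_apply] using hi)

lemma walsh_eq {n : ℕ} (f : (Fin n → ZMod 2) → ZMod 2) (u : Fin n → ZMod 2) :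
    walsh f u = ∑ x : Fin n → ZMod 2, chi (f x) * chi (∑ i, x i * u i) := by
  unfold walsh
  exact Finset.sum_congr rfl fun x _ => (chi_add _ _)

lemma pi_add_eq_zero_iff {n : ℕ} (x y : Fin n → ZMod 2) : x + y = 0 ↔ x = y := by
  constructor
  · intro h; funext i
    have := congrFun h i
    revert this
    have : ∀ a b : ZMod 2, a + b = 0 → a = b := by decide
    exact fun hh => this _ _ hh
  · rintro rfl; funext i
    have : ∀ a : ZMod 2, a + a = 0 := by decide
    exact this _

lemma sum_u_chi {n : ℕ} (x y : Fin n → ZMod 2) :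
    ∑ u : Fin n → ZMod 2, chi (∑ i, (x i + y i) * u i) = if x = y then 2 ^ n else 0 := by
  rw [orth (fun i => x i + y i)]
  congr 1
  simp only [eq_iff_iff]
  rw [show (fun i => x i + y i) = x + y from rfl, pi_add_eq_zero_iff]

lemma walsh_mul_walsh {n : ℕ} (f : (Fin n → ZMod 2) → ZMod 2) (u : Fin n → ZMod 2) :
    walsh f u * walsh f u
      = ∑ x : Fin n → ZMod 2, ∑ y : Fin n → ZMod 2,
          (chi (f x) * chi (f y)) * chi (∑ i, (x i + y i) * u i) := by
  rw [walsh_eq, Finset.sum_mul_sum]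
  refine Finset.sum_congr rfl fun x _ => Finset.sum_congr rfl fun y _ => ?_
  have h1 : chi (∑ i, x i * u i) * chi (∑ i, y i * u i) = chi (∑ i, (x i + y i) * u i) := by
    rw [← chi_add]
    congr 1
    rw [← Finset.sum_add_distrib]
    exact Finset.sum_congr rfl fun i _ => (add_mul _ _ _).symm
  rw [← h1]; ring

lemma parseval {n : ℕ} (f : (Fin n → ZMod 2) → ZMod 2) :
    ∑ u : Fin n → ZMod 2, walsh f u ^ 2 = 2 ^ (2 * n) := by
  have : ∀ u : Fin n → ZMod 2, walsh f u ^ 2 = walsh f u * walsh f u := fun u => sq (walsh f u)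
  simp_rw [this, walsh_mul_walsh]
  rw [Finset.sum_comm]
  have : ∀ x : Fin n → ZMod 2,
      (∑ u : Fin n → ZMod 2, ∑ y : Fin n → ZMod 2,
        (chi (f x) * chi (f y)) * chi (∑ i, (x i + y i) * u i)) = 2 ^ n := by
    intro x
    rw [Finset.sum_comm]
    have : ∀ y : Fin n → ZMod 2,
        (∑ u : Fin n → ZMod 2, (chi (f x) * chi (f y)) * chi (∑ i, (x i + y i) * u i))
          = (chi (f x) * chi (f y)) * (if x = y then 2 ^ n else 0) := by
      intro y; rw [← Finset.mul_sum, sum_u_chi]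
    simp_rw [this, mul_ite, mul_zero]
    rw [Finset.sum_ite_eq (Finset.univ : Finset (Fin n → ZMod 2)) x
      (fun y => chi (f x) * chi (f y) * 2 ^ n)]
    simp [chi_mul_self]
  simp_rw [this]
  simp [Finset.card_univ, Fintype.card_fun]
  rw [← pow_add, two_mul]

lemma walsh_inversion {n : ℕ} (f : (Fin n → ZMod 2) → ZMod 2) (x : Fin n → ZMod 2) :
    ∑ u : Fin n → ZMod 2, walsh f u * chi (∑ i, x i * u i) = 2 ^ n * chi (f x) := by
  have h1 : ∀ u : Fin n → ZMod 2, walsh f u * chi (∑ i, x i * u i)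
      = ∑ y : Fin n → ZMod 2, chi (f y) * chi (∑ i, (y i + x i) * u i) := by
    intro u
    rw [walsh_eq, Finset.sum_mul]
    refine Finset.sum_congr rfl fun y _ => ?_
    rw [mul_assoc, ← chi_add]
    congr 2
    rw [← Finset.sum_add_distrib]
    exact Finset.sum_congr rfl fun i _ => (add_mul _ _ _).symm
  simp_rw [h1]
  rw [Finset.sum_comm]
  have h2 : ∀ y : Fin n → ZMod 2,
      (∑ u : Fin n → ZMod 2, chi (f y) * chi (∑ i, (y i + x i) * u i))
        = chi (f y) * (if y = x then 2 ^ n else 0) := by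
    intro y; rw [← Finset.mul_sum, sum_u_chi]
  simp_rw [h2, mul_ite, mul_zero]
  rw [Finset.sum_ite_eq' (Finset.univ : Finset (Fin n → ZMod 2)) x
    (fun y => chi (f y) * 2 ^ n)]
  simp [mul_comm]

lemma walsh_injective (n : ℕ) :
    Function.Injective (fun f : (Fin n → ZMod 2) → ZMod 2 => walsh f) := by
  intro f g h
  funext x
  have hf := walsh_inversion f x
  have hg := walsh_inversion g x
  rw [show walsh f = walsh g from h] at hf
  rw [hf] at hg
  have h2 : chi (f x) = chi (g x) := by
    have : (2:ℤ) ^ n ≠ 0 := by positivity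
    rw [mul_right_inj' this] at hg
    tauto
  exact chi_inj h2

def wt {n : ℕ} (g : (Fin n → ZMod 2) → ZMod 2) : ℕ := ∑ x, (g x).val

lemma val_le_one (a : ZMod 2) : a.val ≤ 1 := by revert a; decide

lemma wt_le {n : ℕ} (g : (Fin n → ZMod 2) → ZMod 2) : wt g ≤ 2 ^ n := by
  calc wt g ≤ ∑ _x : Fin n → ZMod 2, 1 := Finset.sum_le_sum fun x _ => val_le_one _
  _ = 2 ^ n := by simp [Finset.card_univ, Fintype.card_fun]

lemma walsh_wt {n : ℕ} (f : (Fin n → ZMod 2) → ZMod 2) (u : Fin n → ZMod 2) :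
    walsh f u = 2 ^ n - 2 * (wt (fun x => f x + ∑ i, x i * u i) : ℤ) := by
  have : walsh f u = ∑ x : Fin n → ZMod 2, chi (f x + ∑ i, x i * u i) := rfl
  rw [this]
  simp_rw [chi_eq]
  rw [Finset.sum_sub_distrib, ← Finset.mul_sum]
  simp [wt, Finset.card_univ, Fintype.card_fun]

lemma wt_card {n : ℕ} (g : (Fin n → ZMod 2) → ZMod 2) :
    wt g = (Finset.univ.filter (fun x => g x = 1)).card := by
  rw [Finset.card_filter]
  refine Finset.sum_congr rfl fun x _ => ?_
  have : ∀ a : ZMod 2, a.val = if a = 1 then 1 else 0 := by decide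
  exact this _

lemma count_wt (n w : ℕ) :
  (Finset.univ.filter (fun g : (Fin n → ZMod 2) → ZMod 2 => wt g = w)).card
    = (2 ^ n).choose w := by
  have hcard : (2:ℕ) ^ n = (Finset.univ : Finset (Fin n → ZMod 2)).card := by
    simp [Finset.card_univ, Fintype.card_fun]
  rw [hcard, ← Finset.card_powersetCard w (Finset.univ : Finset (Fin n → ZMod 2))]
  refine Finset.card_bij' (fun g _ => Finset.univ.filter (fun x => g x = 1))
    (fun s _ => fun x => if x ∈ s then 1 else 0) ?_ ?_ ?_ ?_
  · intro g hg
    simp only [Finset.mem_filter, Finset.mem_univ, true_and] at hg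
    simp only [Finset.mem_powersetCard]
    exact ⟨Finset.filter_subset _ _, by rw [← wt_card, hg]⟩
  · intro s hs
    simp only [Finset.mem_powersetCard] at hs
    simp only [Finset.mem_filter, Finset.mem_univ, true_and]
    rw [wt_card, ← hs.2]
    congr 1
    ext x
    simp only [Finset.mem_filter, Finset.mem_univ, true_and]
    by_cases hx : x ∈ s <;> simp [hx]
  · intro g hg
    funext x
    by_cases hx : g x = 1 <;> simp [hx]
    · have : ∀ a : ZMod 2, a ≠ 1 → a = 0 := by decide
      exact (this _ hx).symm
  · intro s hs
    ext x
    simp only [Finset.mem_filter, Finset.mem_univ, true_and]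
    by_cases hx : x ∈ s <;> simp [hx]

lemma spectra_card (n : ℕ) : (spectra n).card = 2 ^ (2 ^ n) := by
  rw [spectra, Finset.card_image_of_injective _ (walsh_injective n)]
  simp [Finset.card_univ, Fintype.card_fun]

lemma filter_spectra_card (n : ℕ) (u : Fin n → ZMod 2) (z : ℤ) :
    ((spectra n).filter (fun b => b u = z)).card
      = (Finset.univ.filter
          (fun f : (Fin n → ZMod 2) → ZMod 2 => walsh f u = z)).card := by
  rw [spectra, Finset.filter_image, Finset.card_image_of_injective _ (walsh_injective n)]

lemma card_walsh_fiber (n : ℕ) (u : Fin n → ZMod 2) (w : ℕ) :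
    (Finset.univ.filter
        (fun f : (Fin n → ZMod 2) → ZMod 2 => walsh f u = 2 ^ n - 2 * (w:ℤ))).card
      = (2 ^ n).choose w := by
  rw [← count_wt n w]
  apply Finset.card_bij (fun f _ => fun x => f x + ∑ i, x i * u i)
  · intro f hf
    simp only [Finset.mem_filter, Finset.mem_univ, true_and] at hf ⊢
    rw [walsh_wt] at hf
    have h2 : ((wt fun x => f x + ∑ i, x i * u i) : ℤ) = (w:ℤ) := by linarith
    exact_mod_cast h2
  · intro f hf g hg h
    funext x
    have := congrFun h x
    have h2 : ∀ a b c : ZMod 2, a + c = b + c → a = b := by decide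
    exact h2 _ _ _ this
  · intro g hg
    simp only [Finset.mem_filter, Finset.mem_univ, true_and] at hg
    refine ⟨fun x => g x + ∑ i, x i * u i, ?_, ?_⟩
    · simp only [Finset.mem_filter, Finset.mem_univ, true_and]
      rw [walsh_wt]
      have h3 : (fun x => (g x + ∑ i, x i * u i) + ∑ i, x i * u i) = g := by
        funext x
        have h2 : ∀ a c : ZMod 2, (a + c) + c = a := by decide
        exact h2 _ _
      rw [show (fun x => (fun x => g x + ∑ i, x i * u i) x + ∑ i, x i * u i) = g from h3, hg]
    · funext x
      have h2 : ∀ a c : ZMod 2, (a + c) + c = a := by decide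
      exact h2 _ _

lemma marginal_walsh (n : ℕ) (u : Fin n → ZMod 2) (f : (Fin n → ZMod 2) → ZMod 2) :
    marginal n u (walsh f u)
      = ((2 ^ n).choose (wt (fun x => f x + ∑ i, x i * u i)) : ℝ) / 2 ^ (2 ^ n) := by
  rw [marginal, spectra_card, filter_spectra_card, walsh_wt, card_walsh_fiber n u _]
  push_cast
  ring



lemma F_hasDeriv (x : ℝ) (hx0 : -1 < x) (hx1 : x < 1) :
    HasDerivAt (fun y : ℝ => Real.log (1 + y) - Real.log (1 - y) - (2 * y + 2/3 * y^3))
      (1/(1+x) + 1/(1-x) - (2 + 2 * x^2)) x := by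
  have h1 : (1:ℝ) + x ≠ 0 := by linarith
  have h2 : (1:ℝ) - x ≠ 0 := by linarith
  have d1 : HasDerivAt (fun y : ℝ => Real.log (1 + y)) (1/(1+x)) x := by
    have inner : HasDerivAt (fun y : ℝ => 1 + y) 1 x := (hasDerivAt_id x).const_add 1
    simpa [Function.comp_def] using (Real.hasDerivAt_log h1).comp x inner
  have d2 : HasDerivAt (fun y : ℝ => Real.log (1 - y)) (-(1/(1-x))) x := by
    have inner : HasDerivAt (fun y : ℝ => 1 - y) (-1) x := by
      exact (hasDerivAt_id x).const_sub 1
    have := (Real.hasDerivAt_log h2).comp x inner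
    simpa [div_eq_mul_inv, mul_comm, Function.comp_def] using this
  have d3 : HasDerivAt (fun y : ℝ => 2 * y + 2/3 * y^3) (2 + 2 * x^2) x := by
    have : HasDerivAt (fun y : ℝ => 2 * y + 2/3 * y^3) (2 * 1 + 2/3 * (3 * x^2)) x := by
      exact ((hasDerivAt_id x).const_mul 2).add (((hasDerivAt_pow 3 x)).const_mul (2/3) |>.congr_deriv (by ring))
    convert this using 1
    ring
  have := (d1.sub d2).sub d3
  exact this.congr_deriv (by ring)

lemma log_ratio_lb {t : ℝ} (h0 : 0 ≤ t) (h1 : t < 1) :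
    2 * t + 2/3 * t^3 ≤ Real.log (1 + t) - Real.log (1 - t) := by
  set F : ℝ → ℝ := fun y => Real.log (1 + y) - Real.log (1 - y) - (2 * y + 2/3 * y^3) with hFdef
  have hmono : MonotoneOn F (Set.Ico (0:ℝ) 1) := by
    apply monotoneOn_of_deriv_nonneg (convex_Ico 0 1)
    · apply ContinuousOn.sub
      apply ContinuousOn.sub
      · apply ContinuousOn.log (by fun_prop)
        intro y hy
        simp only [Set.mem_Ico] at hy
        nlinarith [hy.1, hy.2]
      · apply ContinuousOn.log (by fun_prop)
        intro y hy
        simp only [Set.mem_Ico] at hy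
        nlinarith [hy.1, hy.2]
      · fun_prop
    · intro x hx
      rw [interior_Ico] at hx
      exact (F_hasDeriv x (by linarith [hx.1]) hx.2).differentiableAt.differentiableWithinAt
    · intro x hx
      rw [interior_Ico] at hx
      rw [(F_hasDeriv x (by linarith [hx.1]) hx.2).deriv]
      have hx0 := hx.1
      have hx1 := hx.2
      have e1 : (0:ℝ) < 1 + x := by linarith
      have e2 : (0:ℝ) < 1 - x := by linarith
      have heq : 1/(1+x) + 1/(1-x) - (2 + 2*x^2) = (2*x^4)/((1+x)*(1-x)) := by
        field_simp
        ring
      rw [heq]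
      apply div_nonneg (by positivity) (by nlinarith)
  have h00 : (0:ℝ) ∈ Set.Ico (0:ℝ) 1 := ⟨le_refl 0, one_pos⟩
  have ht : t ∈ Set.Ico (0:ℝ) 1 := ⟨h0, h1⟩
  have := hmono h00 ht h0
  simp only [hFdef] at this
  simp only [Real.log_one, add_zero, sub_zero] at this
  norm_num at this
  linarith

lemma sum_odds (k : ℕ) : ∑ j ∈ Finset.range k, (2 * (j:ℝ) + 1) = (k:ℝ)^2 := by
  induction k with
  | zero => simp
  | succ k ih => rw [Finset.sum_range_succ, ih]; push_cast; ring

lemma sum_odd_cubes (k : ℕ) :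
    ∑ j ∈ Finset.range k, (2 * (j:ℝ) + 1)^3 = (k:ℝ)^2 * (2 * (k:ℝ)^2 - 1) := by
  induction k with
  | zero => simp
  | succ k ih => rw [Finset.sum_range_succ, ih]; push_cast; ring

lemma poly_ineq (M k : ℕ) (hM : 1 ≤ M) (hk : k ≤ M) :
    (k:ℝ)^2 / M - 23 / (36 * M)
      ≤ 2 * (k:ℝ)^2 / (2 * M + 1) + (2/3) * ((k:ℝ)^2 * (2 * (k:ℝ)^2 - 1)) / (2 * M + 1)^3 := by
  have hMR : (1:ℝ) ≤ (M:ℝ) := by exact_mod_cast hM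
  have hkR : (k:ℝ) ≤ (M:ℝ) := by exact_mod_cast hk
  have hk0 : (0:ℝ) ≤ (k:ℝ) := Nat.cast_nonneg k
  have hden : (0:ℝ) < 2 * (M:ℝ) + 1 := by linarith
  rw [div_add_div _ _ (ne_of_gt hden) (by positivity), div_sub_div _ _ (by positivity) (by positivity), div_le_div_iff₀ (by positivity) (by positivity)]
  rcases eq_or_lt_of_le hM with heq | hM2
  · have hM1 : M = 1 := heq.symm
    subst hM1
    interval_cases k <;> norm_num
  · have hM2R : (2:ℝ) ≤ (M:ℝ) := by exact_mod_cast hM2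
    have hm : (0:ℝ) ≤ (M:ℝ) - 2 := by linarith
    have hP : (0:ℝ) ≤ 14592*(M:ℝ)^4 + 4608*(M:ℝ)^3 - 12096*(M:ℝ)^2 - 7680*(M:ℝ) - 1296 := by
      nlinarith [sq_nonneg ((M:ℝ)-2), mul_nonneg (mul_nonneg hm hm) hm,
        mul_nonneg (mul_nonneg (mul_nonneg hm hm) hm) hm]
    nlinarith [sq_nonneg (96*(M:ℝ)*(k:ℝ)^2 - (36*(2*(M:ℝ)+1)^2 + 24*(M:ℝ))), hP, hden,
      mul_nonneg hden.le hP, mul_nonneg hden.le (sq_nonneg (96*(M:ℝ)*(k:ℝ)^2 - (36*(2*(M:ℝ)+1)^2 + 24*(M:ℝ))))]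

lemma choose_prod (M : ℕ) : ∀ k : ℕ, k ≤ M →
    ((2*M).choose (M+k) : ℝ) * ∏ j ∈ Finset.range k, (((M:ℝ)+j+1)/((M:ℝ)-j))
      = ((2*M).choose M : ℝ) := by
  intro k
  induction k with
  | zero => simp
  | succ k ih =>
    intro hk1
    have hk : k < M := hk1
    have hMk : (0:ℝ) < (M:ℝ) - k := by
      have : (k:ℝ) < M := by exact_mod_cast hk
      linarith
    rw [Finset.prod_range_succ]
    have hstep : ((2*M).choose (M+k+1) : ℝ) * (((M:ℝ)+k+1)/((M:ℝ)-k)) = ((2*M).choose (M+k) : ℝ) := by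
      have hnat := Nat.choose_succ_right_eq (2*M) (M+k)
      have hsub : 2*M - (M+k) = M - k := by omega
      rw [hsub] at hnat
      have hcast : ((2*M).choose (M+k+1) : ℝ) * ((M:ℝ)+k+1) = ((2*M).choose (M+k) : ℝ) * ((M:ℝ)-k) := by
        have := congrArg (Nat.cast : ℕ → ℝ) hnat
        push_cast [Nat.cast_sub hk.le] at this
        convert this using 2 <;> push_cast <;> ring
      rw [div_eq_mul_inv, ← mul_assoc, mul_comm (((2*M).choose (M+k+1) : ℝ)) _]
      rw [mul_comm] at hcast
      field_simp
      linarith [hcast]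
    calc ((2*M).choose (M+(k+1)) : ℝ) * (((∏ j ∈ Finset.range k, (((M:ℝ)+j+1)/((M:ℝ)-j)))) * (((M:ℝ)+k+1)/((M:ℝ)-k)))
        = (((2*M).choose (M+k+1) : ℝ) * (((M:ℝ)+k+1)/((M:ℝ)-k))) * ∏ j ∈ Finset.range k, (((M:ℝ)+j+1)/((M:ℝ)-j)) := by
          rw [show M+(k+1) = M+k+1 from rfl]; ring
      _ = ((2*M).choose (M+k) : ℝ) * ∏ j ∈ Finset.range k, (((M:ℝ)+j+1)/((M:ℝ)-j)) := by rw [hstep]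
      _ = ((2*M).choose M : ℝ) := ih hk.le

lemma prod_ratio_ge (M k : ℕ) (hM : 1 ≤ M) (hk : k ≤ M) :
    Real.exp ((k:ℝ)^2/M - 23/(36*M))
      ≤ ∏ j ∈ Finset.range k, (((M:ℝ)+j+1)/((M:ℝ)-j)) := by
  have hMR : (1:ℝ) ≤ (M:ℝ) := by exact_mod_cast hM
  have hfac : ∀ j ∈ Finset.range k, (0:ℝ) < ((M:ℝ)+j+1)/((M:ℝ)-j) := by
    intro j hj
    rw [Finset.mem_range] at hj
    have hjM : (j:ℝ) < M := by
      have : j < M := lt_of_lt_of_le hj hk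
      exact_mod_cast this
    apply _root_.div_pos <;> [positivity; linarith]
  have hlog : ∀ j ∈ Finset.range k,
      2 * ((2*(j:ℝ)+1)/(2*M+1)) + 2/3 * ((2*(j:ℝ)+1)/(2*M+1))^3
        ≤ Real.log (((M:ℝ)+j+1)/((M:ℝ)-j)) := by
    intro j hj
    rw [Finset.mem_range] at hj
    have hjM : (j:ℝ) < M := by
      have : j < M := lt_of_lt_of_le hj hk
      exact_mod_cast this
    set t : ℝ := (2*(j:ℝ)+1)/(2*M+1) with ht
    have hden : (0:ℝ) < 2*(M:ℝ)+1 := by linarith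
    have ht0 : 0 ≤ t := by positivity
    have ht1 : t < 1 := by
      rw [div_lt_one hden]; linarith
    have hMj : (M:ℝ) - j ≠ 0 := by linarith
    have h1t : (0:ℝ) < 1 - t := by linarith
    have h1t' : (0:ℝ) < 1 + t := by linarith
    have heq : ((M:ℝ)+j+1)/((M:ℝ)-j) = (1+t)/(1-t) := by
      rw [ht]
      rw [div_eq_div_iff (by linarith) (by positivity)]
      field_simp
      ring
    rw [heq, Real.log_div (ne_of_gt h1t') (ne_of_gt h1t)]
    exact log_ratio_lb ht0 ht1
  have hsum : ∑ j ∈ Finset.range k,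
      (2 * ((2*(j:ℝ)+1)/(2*(M:ℝ)+1)) + 2/3 * ((2*(j:ℝ)+1)/(2*(M:ℝ)+1))^3)
        = 2 * (k:ℝ)^2 / (2*(M:ℝ)+1) + (2/3) * ((k:ℝ)^2 * (2*(k:ℝ)^2-1)) / (2*(M:ℝ)+1)^3 := by
    have e1 : ∀ j : ℕ, 2 * ((2*(j:ℝ)+1)/(2*(M:ℝ)+1)) + 2/3 * ((2*(j:ℝ)+1)/(2*(M:ℝ)+1))^3
        = (2*(j:ℝ)+1) * (2/(2*(M:ℝ)+1)) + (2*(j:ℝ)+1)^3 * (2/3/(2*(M:ℝ)+1)^3) := by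
      intro j; rw [div_pow]; ring
    simp_rw [e1]
    rw [Finset.sum_add_distrib, ← Finset.sum_mul, ← Finset.sum_mul, sum_odds, sum_odd_cubes]
    ring
  calc Real.exp ((k:ℝ)^2/M - 23/(36*M))
      ≤ Real.exp (∑ j ∈ Finset.range k,
          (2 * ((2*(j:ℝ)+1)/(2*(M:ℝ)+1)) + 2/3 * ((2*(j:ℝ)+1)/(2*(M:ℝ)+1))^3)) := by
        rw [Real.exp_le_exp, hsum]
        exact poly_ineq M k hM hk
    _ ≤ Real.exp (∑ j ∈ Finset.range k, Real.log (((M:ℝ)+j+1)/((M:ℝ)-j))) := by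
        rw [Real.exp_le_exp]
        exact Finset.sum_le_sum hlog
    _ = ∏ j ∈ Finset.range k, Real.exp (Real.log (((M:ℝ)+j+1)/((M:ℝ)-j))) := Real.exp_sum _ _
    _ = ∏ j ∈ Finset.range k, (((M:ℝ)+j+1)/((M:ℝ)-j)) :=
        Finset.prod_congr rfl fun j hj => Real.exp_log (hfac j hj)
lemma sqrt_pi_le_stirlingSeq {m : ℕ} (hm : 1 ≤ m) : Real.sqrt π ≤ stirlingSeq m := by
  obtain ⟨k, rfl⟩ := Nat.exists_eq_add_of_le hm
  have h2 : Filter.Tendsto (stirlingSeq ∘ Nat.succ) Filter.atTop (𝓝 (Real.sqrt π)) := by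
    apply tendsto_stirlingSeq_sqrt_pi.comp
    exact Filter.tendsto_add_atTop_nat 1
  have := stirlingSeq'_antitone.le_of_tendsto h2 k
  simpa [Nat.succ_eq_add_one, add_comm] using this

lemma factorial_stirling {m : ℕ} (hm : 1 ≤ m) :
    (m ! : ℝ) = stirlingSeq m * (Real.sqrt (2 * m) * (m / exp 1) ^ m) := by
  have hm' : (0:ℝ) < m := by exact_mod_cast hm
  rw [stirlingSeq, div_mul_cancel₀]
  positivity

lemma central_binom_le (M : ℕ) (hM : 1 ≤ M) :
    ((2 * M).choose M : ℝ) ≤ 4 ^ M / Real.sqrt (π * M) := by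
  have hMR : (0:ℝ) < M := by exact_mod_cast hM
  have hchoose : ((2 * M).choose M : ℝ) * (M ! : ℝ) * (M ! : ℝ) = ((2 * M)! : ℝ) := by
    have := Nat.choose_mul_factorial_mul_factorial (show M ≤ 2 * M by omega)
    have h2 : 2 * M - M = M := by omega
    rw [h2] at this
    exact_mod_cast congrArg (Nat.cast : ℕ → ℝ) this
  have hs2M : stirlingSeq (2 * M) ≤ stirlingSeq M := by
    have := stirlingSeq'_antitone (show M - 1 ≤ 2 * M - 1 by omega)
    simpa [Nat.succ_eq_add_one, Nat.sub_add_cancel hM,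
      Nat.sub_add_cancel (show 1 ≤ 2 * M by omega)] using this
  have hsM : Real.sqrt π ≤ stirlingSeq M := sqrt_pi_le_stirlingSeq hM
  have hsMpos : 0 < stirlingSeq M := lt_of_lt_of_le (Real.sqrt_pos.mpr pi_pos) hsM
  -- factorial identities
  have h2M := factorial_stirling (show 1 ≤ 2 * M by omega)
  have hMf := factorial_stirling hM
  -- sqrt computations
  have hsqrt4 : Real.sqrt (2 * (2 * M)) = 2 * Real.sqrt M := by
    rw [show (2 : ℝ) * (2 * M) = 4 * M by ring, show (4 : ℝ) * M = 2^2 * M by norm_num,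
      Real.sqrt_mul (by positivity), Real.sqrt_sq (by norm_num)]
  have hsqrt2 : Real.sqrt (2 * M) * Real.sqrt (2 * M) = 2 * M := by
    exact Real.mul_self_sqrt (by positivity)
  have hpow : ((2 * M : ℕ) / exp 1 : ℝ) ^ (2 * M) = 4 ^ M * ((M / exp 1 : ℝ) ^ M * (M / exp 1 : ℝ) ^ M) := by
    rw [← pow_add]
    have : ((2 * M : ℕ) / exp 1 : ℝ) = 2 * ((M : ℝ) / exp 1) := by
      push_cast; ring
    rw [this, mul_pow, ← two_mul M, pow_mul]
    norm_num
  -- combine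
  have hfact2 : ((2 * M)! : ℝ) ≤ stirlingSeq M * (2 * Real.sqrt M * (4 ^ M * ((M / exp 1 : ℝ) ^ M * (M / exp 1 : ℝ) ^ M))) := by
    rw [h2M]
    push_cast at hsqrt4 hpow ⊢
    rw [hsqrt4, hpow]
    have hrest : (0:ℝ) ≤ 2 * Real.sqrt M * (4 ^ M * ((M / exp 1 : ℝ) ^ M * (M / exp 1 : ℝ) ^ M)) := by positivity
    nlinarith [mul_le_mul_of_nonneg_right hs2M hrest]
  have hMe : (0:ℝ) < (M / exp 1 : ℝ) ^ M := by positivity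
  have hfactM : stirlingSeq M * Real.sqrt π * ((2 * M) * ((M / exp 1 : ℝ) ^ M * (M / exp 1 : ℝ) ^ M)) ≤ (M ! : ℝ) * (M ! : ℝ) := by
    rw [hMf]
    have e2 : (stirlingSeq M * (Real.sqrt (2*(M:ℝ)) * ((M:ℝ) / exp 1) ^ M)) * (stirlingSeq M * (Real.sqrt (2*(M:ℝ)) * ((M:ℝ) / exp 1) ^ M))
        = (stirlingSeq M * stirlingSeq M) * ((Real.sqrt (2*(M:ℝ)) * Real.sqrt (2*(M:ℝ))) * (((M:ℝ) / exp 1) ^ M * ((M:ℝ) / exp 1) ^ M)) := by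
      ring
    push_cast at hsqrt2
    rw [hsqrt2] at e2
    push_cast
    rw [e2]
    have e3 : stirlingSeq M * Real.sqrt π ≤ stirlingSeq M * stirlingSeq M :=
      mul_le_mul_of_nonneg_left hsM hsMpos.le
    nlinarith [mul_le_mul_of_nonneg_right e3 (show (0:ℝ) ≤ (2*(M:ℝ)) * ((M / exp 1 : ℝ) ^ M * (M / exp 1 : ℝ) ^ M) by positivity)]
  -- conclude
  have hsp : (0:ℝ) < Real.sqrt π := Real.sqrt_pos.mpr pi_pos
  have hsqM : (0:ℝ) < Real.sqrt M := Real.sqrt_pos.mpr hMR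
  have hkey : ((2 * M).choose M : ℝ) * (stirlingSeq M * Real.sqrt π * ((2 * M) * ((M / exp 1 : ℝ) ^ M * (M / exp 1 : ℝ) ^ M)))
      ≤ stirlingSeq M * (2 * Real.sqrt M * (4 ^ M * ((M / exp 1 : ℝ) ^ M * (M / exp 1 : ℝ) ^ M))) := by
    calc ((2 * M).choose M : ℝ) * (stirlingSeq M * Real.sqrt π * ((2 * M) * ((M / exp 1 : ℝ) ^ M * (M / exp 1 : ℝ) ^ M)))
        ≤ ((2 * M).choose M : ℝ) * ((M ! : ℝ) * (M ! : ℝ)) :=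
          mul_le_mul_of_nonneg_left hfactM (by positivity)
      _ = ((2 * M)! : ℝ) := by rw [← hchoose]; ring
      _ ≤ _ := hfact2
  rw [le_div_iff₀ (show (0:ℝ) < Real.sqrt (π * M) by positivity)]
  have hsqpiM : Real.sqrt (π * M) = Real.sqrt π * Real.sqrt M := Real.sqrt_mul pi_pos.le _
  rw [hsqpiM]
  have hMM : Real.sqrt M * Real.sqrt M = (M:ℝ) := Real.mul_self_sqrt hMR.le
  apply le_of_mul_le_mul_right ?_ (show (0:ℝ) < stirlingSeq M * (2*(M:ℝ)*((( M:ℝ)/exp 1)^M*(((M:ℝ))/exp 1)^M)) by positivity)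
  calc ((2 * M).choose M : ℝ) * (Real.sqrt π * Real.sqrt M) * (stirlingSeq M * (2*(M:ℝ)*(((M:ℝ)/exp 1)^M*(((M:ℝ))/exp 1)^M)))
      = (((2 * M).choose M : ℝ) * (stirlingSeq M * Real.sqrt π * ((2 * (M:ℝ)) * (((M:ℝ) / exp 1) ^ M * ((M:ℝ) / exp 1) ^ M)))) * Real.sqrt M := by
        push_cast; ring
    _ ≤ (stirlingSeq M * (2 * Real.sqrt M * (4 ^ M * (((M:ℝ) / exp 1) ^ M * ((M:ℝ) / exp 1) ^ M)))) * Real.sqrt M := by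
        apply mul_le_mul_of_nonneg_right ?_ hsqM.le
        push_cast at hkey ⊢
        exact hkey
    _ = (stirlingSeq M * (2 * (4 ^ M * (((M:ℝ) / exp 1) ^ M * ((M:ℝ) / exp 1) ^ M)))) * (Real.sqrt M * Real.sqrt M) := by ring
    _ = 4 ^ M * (stirlingSeq M * (2*(M:ℝ)*(((M:ℝ)/exp 1)^M*(((M:ℝ))/exp 1)^M))) := by rw [hMM]; ring

lemma pointwise_k (M k : ℕ) (hM : 1 ≤ M) (hk : k ≤ M) :
    ((2*M).choose (M+k) : ℝ)
      ≤ 4 ^ M / Real.sqrt (π * M) * Real.exp (23/(36*M) - (k:ℝ)^2/M) := by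
  have hMR : (1:ℝ) ≤ (M:ℝ) := by exact_mod_cast hM
  have hE : (0:ℝ) < Real.exp ((k:ℝ)^2/M - 23/(36*M)) := Real.exp_pos _
  have h1 : ((2*M).choose (M+k) : ℝ) * Real.exp ((k:ℝ)^2/M - 23/(36*M))
      ≤ ((2*M).choose M : ℝ) := by
    calc ((2*M).choose (M+k) : ℝ) * Real.exp ((k:ℝ)^2/M - 23/(36*M))
        ≤ ((2*M).choose (M+k) : ℝ) * ∏ j ∈ Finset.range k, (((M:ℝ)+j+1)/((M:ℝ)-j)) :=
          mul_le_mul_of_nonneg_left (prod_ratio_ge M k hM hk) (Nat.cast_nonneg _)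
      _ = ((2*M).choose M : ℝ) := choose_prod M k hk
  have h2 : ((2*M).choose M : ℝ) ≤ 4 ^ M / Real.sqrt (π * M) := central_binom_le M hM
  have h3 : ((2*M).choose (M+k) : ℝ) ≤ (4 ^ M / Real.sqrt (π * M)) * Real.exp (-((k:ℝ)^2/M - 23/(36*M))) := by
    rw [Real.exp_neg, ← div_eq_mul_inv, le_div_iff₀ hE]
    exact le_trans h1 h2
  convert h3 using 2
  ring

lemma pointwise_w (M w : ℕ) (hM : 1 ≤ M) (hw : w ≤ 2*M) :
    ((2*M).choose w : ℝ)
      ≤ 4 ^ M / Real.sqrt (π * M) * Real.exp (23/(36*M) - ((M:ℝ)-(w:ℝ))^2/M) := by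
  rcases le_or_gt M w with h | h
  · obtain ⟨k, rfl⟩ := Nat.exists_eq_add_of_le h
    have hk : k ≤ M := by omega
    have : ((M:ℝ) - (M+k:ℕ)) ^ 2 = (k:ℝ)^2 := by push_cast; ring
    rw [this]
    exact pointwise_k M k hM hk
  · have hkM : M - w ≤ M := by omega
    have hsym : (2*M).choose w = (2*M).choose (M + (M - w)) := by
      have h1 : M + (M - w) = 2*M - w := by omega
      rw [h1]
      exact (Nat.choose_symm hw).symm
    rw [hsym]
    have hcast : ((M:ℝ) - (w:ℝ))^2 = ((M - w : ℕ) : ℝ)^2 := by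
      rw [Nat.cast_sub h.le]
    rw [hcast]
    exact pointwise_k M (M - w) hM hkM

lemma term_bound (m : ℕ) (f : (Fin (m+1) → ZMod 2) → ZMod 2) :
    ∏ u : Fin (m+1) → ZMod 2, marginal (m+1) u (walsh f u)
      ≤ Real.exp (23/18) * (1/(π * Real.exp 1 * ((2^m : ℕ) : ℝ)))^(2^m : ℕ) := by
  set M : ℕ := 2^m with hMdef
  have hM : 1 ≤ M := Nat.one_le_two_pow
  have hMR : (1:ℝ) ≤ (M:ℝ) := by exact_mod_cast hM
  have hN : 2^(m+1) = 2*M := by rw [hMdef, pow_succ, mul_comm]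
  set w : (Fin (m+1) → ZMod 2) → (Fin (m+1) → ZMod 2) → ℕ :=
    fun u => fun uu => wt (fun x => f x + ∑ i, x i * uu i) with hwdef
  -- each marginal value
  have hmarg : ∀ u : Fin (m+1) → ZMod 2,
      marginal (m+1) u (walsh f u) = ((2*M).choose (w u u) : ℝ) / 2^(2*M) := by
    intro u
    rw [marginal_walsh (m+1) u f]
    rw [hN]
  have hwle : ∀ u : Fin (m+1) → ZMod 2, w u u ≤ 2*M := by
    intro u
    rw [← hN]
    exact wt_le _
  -- pointwise bound on each factor
  have hfactor : ∀ u : Fin (m+1) → ZMod 2,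
      marginal (m+1) u (walsh f u)
        ≤ (1/Real.sqrt (π * M)) * Real.exp (23/(36*M) - ((M:ℝ)-(w u u : ℝ))^2/M) := by
    intro u
    rw [hmarg u]
    have h1 := pointwise_w M (w u u) hM (hwle u)
    have h2 : (0:ℝ) < 2^(2*M) := by positivity
    rw [div_le_iff₀ h2]
    calc ((2*M).choose (w u u) : ℝ)
        ≤ 4 ^ M / Real.sqrt (π * M) * Real.exp (23/(36*M) - ((M:ℝ)-(w u u : ℝ))^2/M) := h1
      _ = 1/Real.sqrt (π * M) * Real.exp (23/(36*M) - ((M:ℝ)-(w u u : ℝ))^2/M) * 2^(2*M) := by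
          rw [show (2:ℝ)^(2*M) = 4^M by rw [pow_mul]; norm_num]
          ring
  -- product bound
  have hprod : ∏ u : Fin (m+1) → ZMod 2, marginal (m+1) u (walsh f u)
      ≤ ∏ u : Fin (m+1) → ZMod 2,
          ((1/Real.sqrt (π * M)) * Real.exp (23/(36*M) - ((M:ℝ)-(w u u : ℝ))^2/M)) := by
    apply Finset.prod_le_prod
    · intro u _
      rw [hmarg u]
      positivity
    · intro u _
      exact hfactor u
  -- Parseval in ℝ
  have hpars : ∑ u : Fin (m+1) → ZMod 2, ((M:ℝ)-(w u u : ℝ))^2 = (M:ℝ)^2 := by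
    have hZ := parseval f
    have hw : ∀ u : Fin (m+1) → ZMod 2, walsh f u = 2^(m+1) - 2 * (w u u : ℤ) := fun u =>
      walsh_wt f u
    have h4 : ∑ u : Fin (m+1) → ZMod 2, ((2:ℤ)^(m+1) - 2 * (w u u : ℤ))^2 = 2^(2*(m+1)) := by
      rw [← hZ]
      exact Finset.sum_congr rfl fun u _ => by rw [← hw u]
    have h5 : ∑ u : Fin (m+1) → ZMod 2, ((2*(M:ℝ)) - 2 * (w u u : ℝ))^2 = 4*(M:ℝ)^2 := by
      have := congrArg (Int.cast : ℤ → ℝ) h4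
      push_cast at this
      rw [show ((2:ℝ)^(m+1)) = 2*(M:ℝ) by rw [hMdef]; push_cast; rw [pow_succ]; ring] at this
      rw [this, show 2*(m+1) = (m+1)+(m+1) by ring, pow_add]
      rw [show ((2:ℝ)^(m+1)) = 2*(M:ℝ) by rw [hMdef]; push_cast; rw [pow_succ]; ring]
      ring
    have h6 : ∑ u : Fin (m+1) → ZMod 2, ((2*(M:ℝ)) - 2 * (w u u : ℝ))^2
        = 4 * ∑ u : Fin (m+1) → ZMod 2, ((M:ℝ)-(w u u : ℝ))^2 := by
      rw [Finset.mul_sum]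
      exact Finset.sum_congr rfl fun u _ => by ring
    rw [h6] at h5
    linarith
  -- compute the RHS product
  have hcard : (Finset.univ : Finset (Fin (m+1) → ZMod 2)).card = 2*M := by
    rw [Finset.card_univ, Fintype.card_fun]
    simp [← hN]
  rw [Finset.prod_mul_distrib, Finset.prod_const, hcard, ← Real.exp_sum] at hprod
  have hsum : ∑ u : Fin (m+1) → ZMod 2, (23/(36*(M:ℝ)) - ((M:ℝ)-(w u u : ℝ))^2/(M:ℝ))
      = 23/18 - (M:ℝ) := by
    rw [Finset.sum_sub_distrib, Finset.sum_const, hcard, ← Finset.sum_div, hpars]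
    have hM0 : (M:ℝ) ≠ 0 := by linarith
    simp only [nsmul_eq_mul]; push_cast
    field_simp
    ring
  rw [hsum] at hprod
  refine le_trans hprod (le_of_eq ?_)
  have hsq : Real.sqrt (π * M) ^ 2 = π * M := Real.sq_sqrt (by positivity)
  have hsqpos : (0:ℝ) < Real.sqrt (π * M) := Real.sqrt_pos.mpr (by positivity)
  rw [Real.exp_sub, ← Real.exp_one_pow]
  rw [pow_mul, div_pow, one_pow, hsq]
  have hpe : (0:ℝ) < π * Real.exp 1 * (M:ℝ) := by positivity
  rw [div_pow, one_pow, div_pow, one_pow, mul_pow, mul_pow]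
  have hppos : (0:ℝ) < π * (M:ℝ) := by positivity
  field_simp
  ring

theorem latin_dependence_spectra (n : ℕ) :
    latinDegree n ≤ Real.exp (23 / 18) *
      (8 / (π * Real.exp 1 * (2 ^ n : ℝ))) ^ (((2 ^ n : ℕ) : ℝ) / 2) := by
  cases n with
  | zero =>
    -- latinDegree 0 ≤ 2
    have h1 : latinDegree 0 ≤ 2 := by
      rw [latinDegree]
      calc ∑ b ∈ spectra 0, ∏ u : Fin 0 → ZMod 2, marginal 0 u (b u)
          ≤ ∑ _b ∈ spectra 0, (1:ℝ) := by
            apply Finset.sum_le_sum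
            intro b _
            apply Finset.prod_le_one
            · intro u _
              rw [marginal]
              positivity
            · intro u _
              rw [marginal]
              apply div_le_one_of_le₀
              · exact Nat.cast_le.mpr (Finset.card_filter_le _ _)
              · positivity
        _ = 2 := by rw [Finset.sum_const, spectra_card]; norm_num
    refine le_trans h1 ?_
    have hexp : (41:ℝ)/18 ≤ Real.exp (23/18) := by
      have := Real.add_one_le_exp (23/18 : ℝ)
      linarith
    have hpi : π < 3.15 := Real.pi_lt_d2
    have he : Real.exp 1 < 2.7182818286 := Real.exp_one_lt_d9
    have hbase : (1296:ℝ)/1681 ≤ 8 / (π * Real.exp 1 * (2^(0:ℕ) : ℝ)) := by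
      rw [pow_zero, mul_one]
      rw [div_le_div_iff₀ (by norm_num) (by positivity)]
      nlinarith [Real.exp_pos 1, Real.pi_pos]
    have hexpo : (((2^(0:ℕ) : ℕ) : ℝ)/2) = (1:ℝ)/2 := by norm_num
    rw [hexpo]
    have hbpos : (0:ℝ) ≤ 8 / (π * Real.exp 1 * (2^(0:ℕ) : ℝ)) := by positivity
    have hsq : (36:ℝ)/41 ≤ (8 / (π * Real.exp 1 * (2^(0:ℕ) : ℝ))) ^ ((1:ℝ)/2) := by
      rw [show (1:ℝ)/2 = ((1:ℝ)/2) from rfl, ← Real.sqrt_eq_rpow]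
      rw [show (36:ℝ)/41 = Real.sqrt ((36/41)^2) by rw [Real.sqrt_sq (by norm_num)]]
      apply Real.sqrt_le_sqrt
      calc ((36:ℝ)/41)^2 = 1296/1681 := by norm_num
        _ ≤ _ := hbase
    calc (2:ℝ) = (41/18) * (36/41) := by norm_num
      _ ≤ Real.exp (23/18) * (8 / (π * Real.exp 1 * (2^(0:ℕ) : ℝ))) ^ ((1:ℝ)/2) := by
          apply mul_le_mul hexp hsq (by norm_num) (le_trans (by norm_num) hexp)
  | succ m =>
    set M : ℕ := 2^m with hMdef
    have hM : 1 ≤ M := Nat.one_le_two_pow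
    have hMR : (1:ℝ) ≤ (M:ℝ) := by exact_mod_cast hM
    have hN : 2^(m+1) = 2*M := by rw [hMdef, pow_succ, mul_comm]
    have hsum : latinDegree (m+1)
        = ∑ f ∈ (Finset.univ : Finset ((Fin (m+1) → ZMod 2) → ZMod 2)),
            ∏ u : Fin (m+1) → ZMod 2, marginal (m+1) u (walsh f u) := by
      rw [latinDegree, spectra]
      rw [Finset.sum_image (fun x _ y _ h => walsh_injective (m+1) h)]
    rw [hsum]
    have hbound : ∑ f ∈ (Finset.univ : Finset ((Fin (m+1) → ZMod 2) → ZMod 2)),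
        ∏ u : Fin (m+1) → ZMod 2, marginal (m+1) u (walsh f u)
          ≤ 2^(2^(m+1)) * (Real.exp (23/18) * (1/(π * Real.exp 1 * (M : ℝ)))^(M : ℕ)) := by
      calc ∑ f ∈ (Finset.univ : Finset ((Fin (m+1) → ZMod 2) → ZMod 2)),
          ∏ u : Fin (m+1) → ZMod 2, marginal (m+1) u (walsh f u)
          ≤ ∑ _f ∈ (Finset.univ : Finset ((Fin (m+1) → ZMod 2) → ZMod 2)),
              (Real.exp (23/18) * (1/(π * Real.exp 1 * (M : ℝ)))^(M : ℕ)) :=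
            Finset.sum_le_sum fun f _ => term_bound m f
        _ = 2^(2^(m+1)) * (Real.exp (23/18) * (1/(π * Real.exp 1 * (M : ℝ)))^(M : ℕ)) := by
            rw [Finset.sum_const, Finset.card_univ, Fintype.card_fun]
            simp [Fintype.card_fun]
    refine le_trans hbound (le_of_eq ?_)
    have hexpo : (((2^(m+1) : ℕ) : ℝ)/2) = ((M:ℕ) : ℝ) := by
      rw [hN]; push_cast; ring
    rw [hexpo, Real.rpow_natCast]
    have h2N : (2:ℝ)^(2^(m+1)) = 4^M := by
      rw [hN, pow_mul]
      norm_num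
    rw [h2N]
    have hpe : (0:ℝ) < π * Real.exp 1 * (M:ℝ) := by positivity
    have hbase : 8 / (π * Real.exp 1 * (2^(m+1) : ℝ)) = 4 * (1/(π * Real.exp 1 * (M : ℝ))) := by
      rw [show ((2:ℝ)^(m+1)) = 2*(M:ℝ) by rw [hMdef]; push_cast; rw [pow_succ]; ring]
      field_simp
      ring
    rw [hbase, mul_pow]
    ring
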